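/- arXiv:math/0203095 — 2 statements merged into one kernel-verified Lean document; each statement's English description precedes it below -/
import Mathlib

section
/- Let C ⊆ (ℝ^n)* be a rational simplicial n-cone, F ⊆ C a facet, and l the edge of the dual cone C* ⊆ ℝ^n corresponding to F under duality (i.e., l = C* ∩ F^⊥). Let e be the lattice generator of l ∩ ℤ^n ≅ ℤ₊ and N₊ = C* ∩ ℤ^n. Then there is a rank-(n−1) simplicial normal affine monoid M′ such that ℤ₋e + N₊, as a monoid, equals ℤe + M′ (direct sum), and (ℝe + ℝ₊M′)* = F. -/
open scoped NNReal
noncomputable section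

/-- Real image of an integer vector. -/
def toR {r : ℕ} (v : Fin r → ℤ) : Fin r → ℝ := fun i => (v i : ℝ)

/-- The group of differences of a submonoid of an abelian group. -/
def gp {G : Type*} [AddCommGroup G] (M : AddSubmonoid G) : AddSubgroup G :=
  AddSubgroup.closure (M : Set G)

/-- `M` is normal: `c • x ∈ M` for `x ∈ gp M`, `c ≥ 1` implies `x ∈ M`. -/
def IsNormalMonoid {G : Type*} [AddCommGroup G] (M : AddSubmonoid G) : Prop :=
  ∀ (c : ℕ) (x : G), 0 < c → x ∈ gp M → (c : ℤ) • x ∈ M → x ∈ M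

/-- `M` is positive: no nontrivial units. -/
def IsPositiveMonoid {G : Type*} [AddCommGroup G] (M : AddSubmonoid G) : Prop :=
  ∀ x ∈ M, -x ∈ M → x = 0

/-- The cone `ℝ₊M ⊆ ℝ^r` spanned by a submonoid `M ⊆ ℤ^r`. -/
def coneM {r : ℕ} (M : AddSubmonoid (Fin r → ℤ)) : Set (Fin r → ℝ) :=
  (Submodule.span ℝ≥0 (toR '' (M : Set (Fin r → ℤ))) : Submodule ℝ≥0 (Fin r → ℝ))

/-- The distinguished vector `e = (1,0) ∈ ℤ ⊕ ℤ^r`. -/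
def eVec (r : ℕ) : ℤ × (Fin r → ℤ) := (1, 0)

/-- `M_i = (ℝ ⊕ ℝ₊M) ∩ (ℤ(x₁ - ie) + ⋯ + ℤ(x_r - ie))`, with `x_j - ie = (-i, x_j)`. -/
def Mi {r : ℕ} (M : AddSubmonoid (Fin r → ℤ)) (x : Fin r → (Fin r → ℤ)) (i : ℕ) :
    Set (ℤ × (Fin r → ℤ)) :=
  {p | p ∈ AddSubgroup.closure (Set.range fun j => ((-(i : ℤ), x j) : ℤ × (Fin r → ℤ))) ∧
       toR p.2 ∈ coneM M}

/-- The submonoid (as a set) `ℤ₊e + M_i`. -/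
def ZeMi {r : ℕ} (M : AddSubmonoid (Fin r → ℤ)) (x : Fin r → (Fin r → ℤ)) (i : ℕ) :
    Set (ℤ × (Fin r → ℤ)) :=
  {p | ∃ (z : ℕ) (m : ℤ × (Fin r → ℤ)), m ∈ Mi M x i ∧ p = (z : ℤ) • eVec r + m}

/-- The standard pairing between `ℝⁿ` (viewed as the dual space via the dot product)
and `ℝⁿ`. -/
def dotP {n : ℕ} (φ x : Fin n → ℝ) : ℝ := ∑ i, φ i * x i

namespace St18


lemma toR_add {r : ℕ} (x y : Fin r → ℤ) : toR (x + y) = toR x + toR y := by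
  funext i; simp [toR]

lemma toR_sub {r : ℕ} (x y : Fin r → ℤ) : toR (x - y) = toR x - toR y := by
  funext i; simp [toR]

lemma toR_zero {r : ℕ} : toR (0 : Fin r → ℤ) = 0 := by funext i; simp [toR]

lemma toR_zsmul {r : ℕ} (z : ℤ) (x : Fin r → ℤ) : toR (z • x) = (z : ℝ) • toR x := by
  funext i; simp [toR]

lemma toR_nsmul {r : ℕ} (z : ℕ) (x : Fin r → ℤ) : toR (z • x) = (z : ℝ) • toR x := by
  funext i; simp [toR]

lemma toR_sum {r : ℕ} {ι : Type*} (s : Finset ι) (f : ι → Fin r → ℤ) :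
    toR (∑ k ∈ s, f k) = ∑ k ∈ s, toR (f k) := by
  funext i; simp [toR, Finset.sum_apply]

lemma dotP_add_right {n : ℕ} (φ x y : Fin n → ℝ) : dotP φ (x + y) = dotP φ x + dotP φ y := by
  simp [dotP, mul_add, Finset.sum_add_distrib]

lemma dotP_neg_right {n : ℕ} (φ x : Fin n → ℝ) : dotP φ (-x) = -dotP φ x := by
  simp [dotP, ← Finset.sum_neg_distrib]

lemma dotP_sub_right {n : ℕ} (φ x y : Fin n → ℝ) : dotP φ (x - y) = dotP φ x - dotP φ y := by
  simp [dotP, mul_sub, Finset.sum_sub_distrib]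

lemma dotP_smul_right {n : ℕ} (φ x : Fin n → ℝ) (t : ℝ) : dotP φ (t • x) = t * dotP φ x := by
  simp only [dotP, Finset.mul_sum, Pi.smul_apply, smul_eq_mul]
  exact Finset.sum_congr rfl fun i _ => by ring

lemma dotP_zero_right {n : ℕ} (φ : Fin n → ℝ) : dotP φ 0 = 0 := by simp [dotP]

lemma dotP_comm {n : ℕ} (φ x : Fin n → ℝ) : dotP φ x = dotP x φ := by
  simp [dotP, mul_comm]

lemma dotP_sum_right {n : ℕ} {ι : Type*} (φ : Fin n → ℝ) (s : Finset ι) (f : ι → Fin n → ℝ) :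
    dotP φ (∑ k ∈ s, f k) = ∑ k ∈ s, dotP φ (f k) := by
  classical
  induction s using Finset.induction with
  | empty => simp [dotP_zero_right]
  | insert a s h ih => rw [Finset.sum_insert h, Finset.sum_insert h, dotP_add_right, ih]

lemma dotP_sum_smul_right {n : ℕ} {ι : Type*} (φ : Fin n → ℝ) (s : Finset ι)
    (c : ι → ℝ) (f : ι → Fin n → ℝ) :
    dotP φ (∑ k ∈ s, c k • f k) = ∑ k ∈ s, c k * dotP φ (f k) := by
  rw [dotP_sum_right]
  exact Finset.sum_congr rfl fun k _ => dotP_smul_right _ _ _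

lemma dotP_self_eq_zero {n : ℕ} {x : Fin n → ℝ} (h : dotP x x = 0) : x = 0 := by
  funext i
  have h2 : ∀ j ∈ Finset.univ, (0:ℝ) ≤ x j * x j := fun j _ => mul_self_nonneg _
  have := (Finset.sum_eq_zero_iff_of_nonneg h2).mp h i (Finset.mem_univ i)
  simpa [mul_self_eq_zero] using this

lemma span_nonneg {n : ℕ} (S : Set (Fin n → ℝ)) (φ : Fin n → ℝ)
    (h : ∀ s ∈ S, 0 ≤ dotP φ s) :
    ∀ x ∈ (Submodule.span ℝ≥0 S : Submodule ℝ≥0 (Fin n → ℝ)), 0 ≤ dotP φ x := by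
  intro x hx
  induction hx using Submodule.span_induction with
  | mem s hs => exact h s hs
  | zero => simp [dotP_zero_right]
  | add x y _ _ hx hy => rw [dotP_add_right]; positivity
  | smul a x _ hx =>
      rw [NNReal.smul_def, dotP_smul_right]
      exact mul_nonneg a.2 hx

lemma span_zero {n : ℕ} (S : Set (Fin n → ℝ)) (φ : Fin n → ℝ)
    (h : ∀ s ∈ S, dotP φ s = 0) :
    ∀ x ∈ (Submodule.span ℝ≥0 S : Submodule ℝ≥0 (Fin n → ℝ)), dotP φ x = 0 := by
  intro x hx
  induction hx using Submodule.span_induction with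
  | mem s hs => exact h s hs
  | zero => simp [dotP_zero_right]
  | add x y _ _ hx hy => rw [dotP_add_right, hx, hy]; ring
  | smul a x _ hx => rw [NNReal.smul_def, dotP_smul_right, hx]; ring

lemma spanR_zero {n : ℕ} (S : Set (Fin n → ℝ)) (φ : Fin n → ℝ)
    (h : ∀ s ∈ S, dotP φ s = 0) :
    ∀ x ∈ (Submodule.span ℝ S : Submodule ℝ (Fin n → ℝ)), dotP φ x = 0 := by
  intro x hx
  induction hx using Submodule.span_induction with
  | mem s hs => exact h s hs
  | zero => simp [dotP_zero_right]
  | add x y _ _ hx hy => rw [dotP_add_right, hx, hy]; ring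
  | smul a x _ hx => rw [dotP_smul_right, hx]; ring



lemma dual_int_basis {n : ℕ} (w : Fin n → (Fin n → ℚ))
    (hli : LinearIndependent ℝ (fun j => fun i => ((w j i : ℝ)) : Fin n → Fin n → ℝ)) :
    ∃ (D : ℤ) (bv : Fin n → (Fin n → ℤ)), 0 < D ∧
      ∀ j k, dotP (fun i => ((w j i : ℝ))) (toR (bv k)) = if j = k then (D : ℝ) else 0 := by
  classical
  -- rational dual basis
  obtain ⟨b, hb⟩ : ∃ b : Fin n → (Fin n → ℚ),
      ∀ j k, ∑ i, w j i * b k i = if j = k then 1 else 0 := by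
    set W : Matrix (Fin n) (Fin n) ℚ := Matrix.of w with hW
    have hliW : LinearIndependent ℝ (W.map (Rat.cast : ℚ → ℝ)) := by
      have hWR : (W.map (Rat.cast : ℚ → ℝ)) = Matrix.of (fun j i => ((w j i : ℝ))) := by
        ext j i; simp [hW]
      rw [hWR]; exact hli
    have hu : IsUnit (W.map (Rat.cast : ℚ → ℝ)) := Matrix.linearIndependent_rows_iff_isUnit.mp hliW
    have hdetR : (W.map (Rat.cast : ℚ → ℝ)).det ≠ 0 :=
      IsUnit.ne_zero (Matrix.isUnit_iff_isUnit_det _ |>.mp hu)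
    have hdet : W.det ≠ 0 := by
      intro h
      apply hdetR
      rw [show W.map (Rat.cast : ℚ → ℝ) = (Rat.castHom ℝ).mapMatrix W from rfl,
        ← RingHom.map_det]
      simp [h]
    have huW : IsUnit W.det := isUnit_iff_ne_zero.mpr hdet
    have hmul : W * W⁻¹ = 1 := Matrix.mul_nonsing_inv W huW
    refine ⟨fun k i => W⁻¹ i k, fun j k => ?_⟩
    have := congrFun (congrFun hmul j) k
    simpa [Matrix.mul_apply, Matrix.one_apply, hW] using this
  -- clear denominators
  obtain ⟨d, hd0, hdz⟩ : ∃ d : ℤ, d ≠ 0 ∧ ∀ p : Fin n × Fin n, ∃ z : ℤ, (z : ℚ) = d * b p.1 p.2 := by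
    obtain ⟨dd, hdd⟩ := IsLocalization.exist_integer_multiples (nonZeroDivisors ℤ) Finset.univ
      (fun p : Fin n × Fin n => b p.1 p.2)
    refine ⟨dd, nonZeroDivisors.coe_ne_zero dd, fun p => ?_⟩
    obtain ⟨z, hz⟩ := hdd p (Finset.mem_univ p)
    exact ⟨z, by simpa [Algebra.smul_def] using hz⟩
  choose zf hzf using hdz
  refine ⟨d ^ 2, fun k i => d * zf (k, i), by positivity, fun j k => ?_⟩
  have hcast : dotP (fun i => ((w j i : ℝ))) (toR fun i => d * zf (k, i))
      = ((∑ i, w j i * ((d : ℚ) ^ 2 * b k i) : ℚ) : ℝ) := by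
    rw [dotP]
    push_cast
    refine Finset.sum_congr rfl fun i _ => ?_
    rw [toR]
    push_cast
    have h : ((zf (k, i) : ℤ) : ℝ) = (d : ℝ) * ((b k i : ℚ) : ℝ) := by
      exact_mod_cast congrArg (fun q : ℚ => (q : ℝ)) (hzf (k, i))
    rw [h]
    ring
  rw [hcast]
  have : (∑ i, w j i * ((d : ℚ) ^ 2 * b k i) : ℚ) = (d : ℚ) ^ 2 * ∑ i, w j i * b k i := by
    rw [Finset.mul_sum]; exact Finset.sum_congr rfl fun i _ => by ring
  rw [this, hb]
  by_cases hjk : j = k <;> simp [hjk]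

lemma primitive_functional {n : ℕ} (e : Fin n → ℤ) (hne : e ≠ 0)
    (he2 : ∀ f : Fin n → ℤ, (∃ g : ℤ, 0 < g ∧ e = g • f) → ∃ t : ℕ, f = (t : ℤ) • e) :
    ∃ z : Fin n → ℤ, ∑ i, z i * e i = 1 := by
  classical
  set L : (Fin n → ℤ) →ₗ[ℤ] ℤ :=
    { toFun := fun z => ∑ i, z i * e i
      map_add' := by intro a b; simp [add_mul, Finset.sum_add_distrib]
      map_smul' := by intro c a; simp [Finset.mul_sum, mul_assoc] } with hL
  set I : Submodule ℤ ℤ := LinearMap.range L with hI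
  have hprin : Submodule.IsPrincipal I := inferInstance
  set g : ℤ := Submodule.IsPrincipal.generator I with hg
  have hspan : Submodule.span ℤ {g} = I := Submodule.IsPrincipal.span_singleton_generator I
  have heI : ∀ i, e i ∈ I := by
    intro i
    refine ⟨Pi.single i 1, ?_⟩
    have hstep : L (Pi.single i 1) = ∑ i1, (Pi.single i 1 : Fin n → ℤ) i1 * e i1 := rfl
    rw [hstep, Finset.sum_eq_single i]
    · simp
    · intro b _ hb; simp [Pi.single_apply, hb]
    · intro h; exact absurd (Finset.mem_univ i) h
  have hdvd : ∀ i, g ∣ e i := by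
    intro i
    have := heI i
    rw [← hspan, Submodule.mem_span_singleton] at this
    obtain ⟨a, ha⟩ := this
    exact ⟨a, by rw [← ha]; simp [smul_eq_mul]; ring⟩
  have hgI : g ∈ I := Submodule.IsPrincipal.generator_mem I
  obtain ⟨z, hz⟩ := hgI
  have hdvd' : ∀ i, |g| ∣ e i := fun i => (abs_dvd _ _).mpr (hdvd i)
  have hg0 : g ≠ 0 := by
    intro h
    apply hne
    funext i
    have := hdvd i
    rw [h, zero_dvd_iff] at this
    simpa using this
  have hgpos : 0 < |g| := abs_pos.mpr hg0
  have hzabs : ∃ z' : Fin n → ℤ, L z' = |g| := by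
    rcases abs_choice g with h | h
    · refine ⟨z, ?_⟩; rw [hz]; exact h.symm
    · refine ⟨-z, ?_⟩
      rw [show L (-z) = -L z from by simp, hz]; exact h.symm
  obtain ⟨z', hz'⟩ := hzabs
  set f : Fin n → ℤ := fun i => e i / |g| with hf
  have hef : e = |g| • f := by
    funext i
    simp only [Pi.smul_apply, smul_eq_mul, hf]
    exact (Int.mul_ediv_cancel' (hdvd' i)).symm
  obtain ⟨t, ht⟩ := he2 f ⟨|g|, hgpos, hef⟩
  have hee : e = (|g| * t) • e := by
    conv_lhs => rw [hef, ht]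
    rw [smul_smul]
  have h1 : |g| * t = 1 := by
    by_contra hne1
    have : (1 - |g| * (t : ℤ)) • e = 0 := by
      rw [sub_smul, one_smul, ← hee]; simp
    obtain ⟨i, hi⟩ := Function.ne_iff.mp hne
    have := congrFun this i
    simp only [Pi.smul_apply, smul_eq_mul, Pi.zero_apply, mul_eq_zero] at this
    rcases this with h | h
    · omega
    · exact hi (by simpa using h)
  have hg1 : |g| = 1 := by
    have := Int.eq_one_of_mul_eq_one_right (le_of_lt hgpos) h1
    exact this
  refine ⟨z', ?_⟩
  have h2 : L z' = 1 := by rw [hz', hg1]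
  exact h2


lemma span_nonneg_left {n : ℕ} (S : Set (Fin n → ℝ)) (x : Fin n → ℝ)
    (h : ∀ s ∈ S, 0 ≤ dotP s x) :
    ∀ φ ∈ (Submodule.span ℝ≥0 S : Submodule ℝ≥0 (Fin n → ℝ)), 0 ≤ dotP φ x := by
  intro φ hφ
  rw [dotP_comm]
  exact span_nonneg S x (fun s hs => by rw [dotP_comm]; exact h s hs) φ hφ

lemma span_zero_left {n : ℕ} (S : Set (Fin n → ℝ)) (x : Fin n → ℝ)
    (h : ∀ s ∈ S, dotP s x = 0) :
    ∀ φ ∈ (Submodule.span ℝ≥0 S : Submodule ℝ≥0 (Fin n → ℝ)), dotP φ x = 0 := by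
  intro φ hφ
  rw [dotP_comm]
  exact span_zero S x (fun s hs => by rw [dotP_comm]; exact h s hs) φ hφ

def sigmaL {n : ℕ} (z : Fin n → ℤ) : (Fin n → ℤ) →ₗ[ℤ] ℤ where
  toFun := fun x => ∑ i, z i * x i
  map_add' := by intro a b; simp [mul_add, Finset.sum_add_distrib]
  map_smul' := by intro c a; simp [Finset.mul_sum]; exact Finset.sum_congr rfl fun i _ => by ring

lemma sigmaL_apply {n : ℕ} (z x : Fin n → ℤ) : sigmaL z x = ∑ i, z i * x i := rfl

lemma sigmaL_cast {n : ℕ} (z x : Fin n → ℤ) :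
    ((sigmaL z x : ℤ) : ℝ) = dotP (toR z) (toR x) := by
  rw [sigmaL_apply, dotP]
  push_cast
  rfl

end St18

set_option maxHeartbeats 2000000 in
/-- let `C` be a rational simplicial n-cone in the dual space, `F` a facet
of `C`, `l = C* ∩ F^⊥` the corresponding edge of the dual cone `C*`, `e` the lattice
generator of `l ∩ ℤⁿ` and `N₊ = C* ∩ ℤⁿ`. Then there is a rank-(n-1) simplicial normal
affine monoid `M′` with `ℤ₋e + N₊ = ℤe + M′` (a direct sum) and `(ℝe + ℝ₊M′)* = F`. -/
theorem statement18 {n : ℕ} (hn : 0 < n)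
    (w : Fin n → (Fin n → ℚ))
    (hli : LinearIndependent ℝ (fun j => fun i => ((w j i : ℝ)) : Fin n → Fin n → ℝ))
    (C : Set (Fin n → ℝ))
    (hC : C = (Submodule.span ℝ≥0
      (Set.range fun j => fun i => ((w j i : ℝ))) : Set (Fin n → ℝ)))
    (j₀ : Fin n)
    (F : Set (Fin n → ℝ))
    (hF : F = (Submodule.span ℝ≥0
      (Set.range fun j : {j : Fin n // j ≠ j₀} => fun i => ((w j.1 i : ℝ))) :
        Set (Fin n → ℝ)))
    (Cstar : Set (Fin n → ℝ))
    (hCstar : Cstar = {x | ∀ φ ∈ C, 0 ≤ dotP φ x})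
    (l : Set (Fin n → ℝ))
    (hl : l = {x ∈ Cstar | ∀ φ ∈ F, dotP φ x = 0})
    (e : Fin n → ℤ)
    (he : ∀ v : Fin n → ℤ, toR v ∈ l ↔ ∃ t : ℕ, v = (t : ℤ) • e) :
    ∃ M' : AddSubmonoid (Fin n → ℤ),
      -- M′ is affine, normal,
      M'.FG ∧ IsNormalMonoid M' ∧
      -- simplicial,
      (∃ u : Fin (n - 1) → (Fin n → ℝ), LinearIndependent ℝ u ∧
        coneM M' = (Submodule.span ℝ≥0 (Set.range u) : Set (Fin n → ℝ))) ∧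
      -- of rank n - 1,
      Nonempty (Module.Basis (Fin (n - 1)) ℤ (gp M')) ∧
      -- ℤ₋e + N₊ = ℤe + M′  (with N₊ = C* ∩ ℤⁿ) ...
      ({v : Fin n → ℤ | ∃ (z : ℕ) (u : Fin n → ℤ), toR u ∈ Cstar ∧ v = u - (z : ℤ) • e}
        = {v : Fin n → ℤ | ∃ (z : ℤ) (m : Fin n → ℤ), m ∈ M' ∧ v = z • e + m}) ∧
      -- ... and the sum ℤe + M′ is direct,
      (∀ (z z' : ℤ) (m m' : Fin n → ℤ), m ∈ M' → m' ∈ M' →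
        z • e + m = z' • e + m' → z = z' ∧ m = m') ∧
      -- and (ℝe + ℝ₊M′)* = F:
      {φ : Fin n → ℝ |
        ∀ q ∈ {q : Fin n → ℝ | ∃ (t : ℝ) (c : Fin n → ℝ), c ∈ coneM M' ∧ q = t • toR e + c},
          0 ≤ dotP φ q} = F := by
  classical
  set wR : Fin n → Fin n → ℝ := fun j i => (w j i : ℝ) with hwR
  obtain ⟨D, bv, hD, pairB0⟩ := St18.dual_int_basis w hli
  have pairB : ∀ j k, dotP (wR j) (toR (bv k)) = if j = k then (D : ℝ) else 0 := pairB0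
  have hDR : (0:ℝ) < (D:ℝ) := by exact_mod_cast hD
  -- the wR span the whole space
  haveI : Nonempty (Fin n) := ⟨⟨0, hn⟩⟩
  have hWtop : Submodule.span ℝ (Set.range wR) = ⊤ := by
    have hco : ⇑(basisOfLinearIndependentOfCardEqFinrank hli
        (by simp : Fintype.card (Fin n) = Module.finrank ℝ (Fin n → ℝ))) = wR :=
      coe_basisOfLinearIndependentOfCardEqFinrank hli _
    rw [← hco]
    exact Module.Basis.span_eq _
  -- vanishing of all pairings forces zero
  have pairZero : ∀ x : Fin n → ℝ, (∀ j, dotP (wR j) x = 0) → x = 0 := by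
    intro x hx
    apply St18.dotP_self_eq_zero
    have hxm : x ∈ Submodule.span ℝ (Set.range wR) := by rw [hWtop]; trivial
    exact St18.spanR_zero (Set.range wR) x
      (fun s hs => by obtain ⟨j, rfl⟩ := hs; rw [St18.dotP_comm]; exact hx j) x hxm
  -- membership in C*
  have memCstar : ∀ x : Fin n → ℝ, x ∈ Cstar ↔ ∀ j, 0 ≤ dotP (wR j) x := by
    intro x
    rw [hCstar]
    constructor
    · intro hx j
      exact hx (wR j) (by rw [hC]; exact Submodule.subset_span ⟨j, rfl⟩)
    · intro hx φ hφ
      rw [hC] at hφ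
      exact St18.span_nonneg_left _ x (fun s hs => by obtain ⟨j, rfl⟩ := hs; exact hx j) φ hφ
  -- orthogonality to F
  have memFperp : ∀ x : Fin n → ℝ, (∀ j, j ≠ j₀ → dotP (wR j) x = 0) →
      ∀ φ ∈ F, dotP φ x = 0 := by
    intro x hx φ hφ
    rw [hF] at hφ
    exact St18.span_zero_left _ x (fun s hs => by obtain ⟨j, rfl⟩ := hs; exact hx j.1 j.2) φ hφ
  -- properties of e
  have hbl : toR (bv j₀) ∈ l := by
    rw [hl]
    refine ⟨(memCstar _).mpr fun j => ?_, memFperp _ fun j hj => ?_⟩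
    · rw [pairB]; split <;> [positivity; rfl]
    · rw [pairB]; simp [hj]
  obtain ⟨t₀, ht₀⟩ := (he (bv j₀)).mp hbl
  have htoR0 : toR (bv j₀) = ((t₀ : ℕ) : ℝ) • toR e := by
    rw [ht₀, St18.toR_zsmul]; norm_num
  have ht₀ne : (t₀ : ℝ) ≠ 0 := by
    intro h0
    have := pairB j₀ j₀
    rw [htoR0, St18.dotP_smul_right, h0] at this
    simp at this
    exact absurd this.symm (ne_of_gt hDR)
  have ht₀pos : (0:ℝ) < (t₀ : ℝ) := lt_of_le_of_ne (by positivity) (Ne.symm ht₀ne)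
  have hje : ∀ j, j ≠ j₀ → dotP (wR j) (toR e) = 0 := by
    intro j hj
    have := pairB j j₀
    rw [htoR0, St18.dotP_smul_right, if_neg hj] at this
    exact (mul_eq_zero.mp this).resolve_left ht₀ne
  have hh : dotP (wR j₀) (toR e) = (D : ℝ) / (t₀ : ℝ) := by
    have := pairB j₀ j₀
    rw [htoR0, St18.dotP_smul_right, if_pos rfl] at this
    field_simp at this ⊢
    linarith
  have hhpos : 0 < dotP (wR j₀) (toR e) := by rw [hh]; positivity
  have hene : e ≠ 0 := by
    intro h0
    rw [h0, St18.toR_zero, St18.dotP_zero_right] at hhpos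
    exact lt_irrefl _ hhpos
  -- the splitting functional
  obtain ⟨z, hz⟩ : ∃ z : Fin n → ℤ, ∑ i, z i * e i = 1 := by
    apply St18.primitive_functional e hene
    rintro f ⟨g, hg, hef⟩
    apply (he f).mp
    have hgR : (0:ℝ) < (g:ℝ) := by exact_mod_cast hg
    have hsc : ∀ j, dotP (wR j) (toR e) = (g:ℝ) * dotP (wR j) (toR f) := by
      intro j
      rw [hef, St18.toR_zsmul, St18.dotP_smul_right]
    rw [hl]
    refine ⟨(memCstar _).mpr fun j => ?_, memFperp _ fun j hj => ?_⟩
    · rcases eq_or_ne j j₀ with hj | hj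
      · have h1 := hsc j
        rw [hj] at h1 ⊢
        nlinarith [hhpos]
      · nlinarith [hsc j, hje j hj]
    · have := hsc j
      rw [hje j hj] at this
      have := (mul_eq_zero.mp this.symm).resolve_left (ne_of_gt hgR)
      exact this
  have hσe : St18.sigmaL z e = 1 := hz
  have hσeR : dotP (toR z) (toR e) = 1 := by
    rw [← St18.sigmaL_cast, hσe]; norm_num
  -- the index type of the facet
  have hcard : Fintype.card {j : Fin n // j ≠ j₀} = n - 1 := by
    simp [Fintype.card_subtype_compl]
  -- the vectors spanning M'
  set vv : {j : Fin n // j ≠ j₀} → (Fin n → ℤ) :=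
    fun k => bv k.1 - (St18.sigmaL z (bv k.1)) • e with hvv
  have hσv : ∀ k, St18.sigmaL z (vv k) = 0 := by
    intro k
    rw [hvv]
    simp only [map_sub, map_smul, hσe, smul_eq_mul, mul_one, sub_self]
  have hσvR : ∀ k, dotP (toR z) (toR (vv k)) = 0 := by
    intro k
    rw [← St18.sigmaL_cast, hσv]; norm_num
  have pairV : ∀ (j : Fin n) (k : {j : Fin n // j ≠ j₀}), j ≠ j₀ →
      dotP (wR j) (toR (vv k)) = if j = k.1 then (D : ℝ) else 0 := by
    intro j k hj
    rw [hvv]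
    simp only []
    rw [St18.toR_sub, St18.toR_zsmul, St18.dotP_sub_right, St18.dotP_smul_right,
      hje j hj, pairB]
    ring
  -- the monoid M'
  set M' : AddSubmonoid (Fin n → ℤ) :=
    { carrier := {x | St18.sigmaL z x = 0 ∧ ∀ j, j ≠ j₀ → 0 ≤ dotP (wR j) (toR x)}
      add_mem' := by
        rintro a b ⟨ha1, ha2⟩ ⟨hb1, hb2⟩
        refine ⟨by rw [map_add, ha1, hb1]; ring, fun j hj => ?_⟩
        rw [St18.toR_add, St18.dotP_add_right]
        exact add_nonneg (ha2 j hj) (hb2 j hj)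
      zero_mem' := by
        refine ⟨by simp, fun j hj => ?_⟩
        rw [St18.toR_zero, St18.dotP_zero_right] } with hM'
  have hmem : ∀ x : Fin n → ℤ, x ∈ M' ↔
      (St18.sigmaL z x = 0 ∧ ∀ j, j ≠ j₀ → 0 ≤ dotP (wR j) (toR x)) := fun x => Iff.rfl
  have hvvM : ∀ k, vv k ∈ M' := by
    intro k
    refine (hmem _).mpr ⟨hσv k, fun j hj => ?_⟩
    rw [pairV j k hj]
    split <;> [positivity; rfl]
  -- the decomposition lemma
  have hDne : (D:ℝ) ≠ 0 := ne_of_gt hDR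
  have decomp : ∀ x : Fin n → ℝ, dotP (toR z) x = 0 →
      x = ∑ k : {j : Fin n // j ≠ j₀}, (dotP (wR k.1) x / (D:ℝ)) • toR (vv k) := by
    intro x hσx
    set c : {j : Fin n // j ≠ j₀} → ℝ := fun k => dotP (wR k.1) x / (D:ℝ) with hc
    set y : Fin n → ℝ := x - ∑ k, c k • toR (vv k) with hy
    have hyj : ∀ j, j ≠ j₀ → dotP (wR j) y = 0 := by
      intro j hj
      rw [hy, St18.dotP_sub_right, St18.dotP_sum_smul_right]
      have hsum : (∑ k : {j : Fin n // j ≠ j₀}, c k * dotP (wR j) (toR (vv k)))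
          = c ⟨j, hj⟩ * (D:ℝ) := by
        rw [Finset.sum_eq_single ⟨j, hj⟩]
        · rw [pairV j ⟨j, hj⟩ hj, if_pos rfl]
        · intro k _ hk
          rw [pairV j k hj, if_neg, mul_zero]
          intro hjk
          exact hk (Subtype.ext hjk.symm)
        · intro hmemx
          exact absurd (Finset.mem_univ _) hmemx
      rw [hsum, hc]
      field_simp
      ring
    have hσy : dotP (toR z) y = 0 := by
      rw [hy, St18.dotP_sub_right, St18.dotP_sum_smul_right, hσx]
      simp [hσvR]
    have hyE : y = (dotP (wR j₀) y / dotP (wR j₀) (toR e)) • toR e := by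
      have hhne : dotP (wR j₀) (toR e) ≠ 0 := ne_of_gt hhpos
      have h0 : y - (dotP (wR j₀) y / dotP (wR j₀) (toR e)) • toR e = 0 := by
        apply pairZero
        intro j
        rcases eq_or_ne j j₀ with hj | hj
        · rw [hj, St18.dotP_sub_right, St18.dotP_smul_right]
          field_simp
          ring
        · rw [St18.dotP_sub_right, St18.dotP_smul_right, hyj j hj, hje j hj, mul_zero,
            sub_zero]
      exact sub_eq_zero.mp h0
    have hs0 : dotP (wR j₀) y / dotP (wR j₀) (toR e) = 0 := by
      have h1 := hσy
      rw [hyE, St18.dotP_smul_right, hσeR, mul_one] at h1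
      exact h1
    have hy0 : y = 0 := by rw [hyE, hs0, zero_smul]
    rw [hy] at hy0
    exact sub_eq_zero.mp hy0

  -- the reindexing equivalence
  set ε : Fin (n-1) ≃ {j : Fin n // j ≠ j₀} := (Fintype.equivFinOfCardEq hcard).symm with hε
  set u : Fin (n-1) → (Fin n → ℝ) := fun k => toR (vv (ε k)) with hu
  -- cone equality
  have hcone : Submodule.span ℝ≥0 (toR '' (M' : Set (Fin n → ℤ)))
      = Submodule.span ℝ≥0 (Set.range u) := by
    apply le_antisymm
    · rw [Submodule.span_le]
      rintro _ ⟨x, hx, rfl⟩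
      obtain ⟨h1, h2⟩ := (hmem x).mp hx
      have hx0 : dotP (toR z) (toR x) = 0 := by rw [← St18.sigmaL_cast, h1]; norm_num
      rw [SetLike.mem_coe, decomp (toR x) hx0]
      apply Submodule.sum_mem
      intro k _
      have hck : 0 ≤ dotP (wR k.1) (toR x) / (D:ℝ) := by
        have := h2 k.1 k.2
        positivity
      have hsm : (dotP (wR k.1) (toR x) / (D:ℝ)) • toR (vv k)
          = (⟨_, hck⟩ : ℝ≥0) • toR (vv k) := by
        rfl
      rw [hsm]
      apply Submodule.smul_mem
      apply Submodule.subset_span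
      exact ⟨ε.symm k, by rw [hu]; simp⟩
    · rw [Submodule.span_le]
      rintro _ ⟨k, rfl⟩
      exact Submodule.subset_span ⟨vv (ε k), hvvM _, rfl⟩
  -- p, the interior vector
  set p : Fin n → ℤ := ∑ k : {j : Fin n // j ≠ j₀}, vv k with hp
  have hpM : p ∈ M' := by
    rw [hp]
    exact AddSubmonoid.sum_mem M' (fun k _ => hvvM k)
  have hppair : ∀ j, j ≠ j₀ → dotP (wR j) (toR p) = (D:ℝ) := by
    intro j hj
    rw [hp, St18.toR_sum, St18.dotP_sum_right]
    rw [Finset.sum_eq_single ⟨j, hj⟩]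
    · rw [pairV j ⟨j, hj⟩ hj, if_pos rfl]
    · intro k _ hk
      rw [pairV j k hj, if_neg (fun hjk => hk (Subtype.ext hjk.symm))]
    · intro hmemx
      exact absurd (Finset.mem_univ _) hmemx
  have hσp : St18.sigmaL z p = 0 := ((hmem p).mp hpM).1
  refine ⟨M', ?_, ?_, ?_, ?_, ?_, ?_, ?_⟩

  · -- FG
    set Bd : Fin n → ℤ := fun i => ∑ k : {j : Fin n // j ≠ j₀}, |vv k i| with hBd
    have hBoxFin : Set.Finite {y : Fin n → ℤ | y ∈ M' ∧ ∀ i, |y i| ≤ Bd i} := by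
      apply Set.Finite.subset (Set.Finite.pi (fun i : Fin n => Set.finite_Icc (-(Bd i)) (Bd i)))
      intro y hy
      rw [Set.mem_pi]
      intro i _
      rw [Set.mem_Icc]
      exact abs_le.mp (hy.2 i)
    refine ⟨hBoxFin.toFinset ∪
      Finset.image (fun k : {j : Fin n // j ≠ j₀} => vv k) Finset.univ, ?_⟩
    apply le_antisymm
    · rw [AddSubmonoid.closure_le]
      intro y hy
      rw [Finset.coe_union, Set.mem_union] at hy
      rcases hy with hy | hy
      · rw [Finset.mem_coe, Set.Finite.mem_toFinset] at hy
        exact hy.1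
      · rw [Finset.mem_coe, Finset.mem_image] at hy
        obtain ⟨k, _, rfl⟩ := hy
        exact hvvM k
    · intro x hx
      obtain ⟨h1, h2⟩ := (hmem x).mp hx
      set c : {j : Fin n // j ≠ j₀} → ℝ := fun k => dotP (wR k.1) (toR x) / (D:ℝ) with hcdef
      have hc0 : ∀ k, 0 ≤ c k := by
        intro k
        have := h2 k.1 k.2
        rw [hcdef]
        positivity
      have hcD : ∀ k, dotP (wR k.1) (toR x) = c k * (D:ℝ) := by
        intro k
        rw [hcdef]
        field_simp
      set m : {j : Fin n // j ≠ j₀} → ℕ := fun k => ⌊c k⌋₊ with hmdef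
      set y : Fin n → ℤ := x - ∑ k, m k • vv k with hydef
      have hsumR : toR (∑ k : {j : Fin n // j ≠ j₀}, m k • vv k)
          = ∑ k : {j : Fin n // j ≠ j₀}, ((m k : ℝ)) • toR (vv k) := by
        rw [St18.toR_sum]
        exact Finset.sum_congr rfl fun k _ => St18.toR_nsmul (m k) (vv k)
      have hypair : ∀ k : {j : Fin n // j ≠ j₀},
          dotP (wR k.1) (toR y) = (c k - (m k : ℝ)) * (D:ℝ) := by
        intro k
        rw [hydef, St18.toR_sub, St18.dotP_sub_right, hsumR, St18.dotP_sum_smul_right]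
        have hsum2 : (∑ k' : {j : Fin n // j ≠ j₀}, (m k' : ℝ) * dotP (wR k.1) (toR (vv k')))
            = (m k : ℝ) * (D:ℝ) := by
          rw [Finset.sum_eq_single k]
          · rw [pairV k.1 k k.2, if_pos rfl]
          · intro k' _ hk'
            rw [pairV k.1 k' k.2, if_neg (fun hkk => hk' (Subtype.ext hkk.symm)), mul_zero]
          · intro hmemx
            exact absurd (Finset.mem_univ _) hmemx
        rw [hsum2, hcD k]
        ring
      have hσy : St18.sigmaL z y = 0 := by
        rw [hydef, map_sub, h1, map_sum, zero_sub, neg_eq_zero]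
        apply Finset.sum_eq_zero
        intro k _
        rw [← natCast_zsmul, map_smul, hσv, smul_zero]
      have hcm : ∀ k, 0 ≤ c k - (m k : ℝ) ∧ c k - (m k : ℝ) ≤ 1 := by
        intro k
        constructor
        · have := Nat.floor_le (hc0 k)
          rw [hmdef]
          linarith
        · have := Nat.lt_floor_add_one (c k)
          rw [hmdef]
          push_cast
          push_cast at this
          linarith
      have hyM : y ∈ M' := by
        refine (hmem _).mpr ⟨hσy, fun j hj => ?_⟩
        have h3 := hypair ⟨j, hj⟩
        rw [h3]
        have h4 := (hcm ⟨j, hj⟩).1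
        nlinarith
      have hyBox : ∀ i, |y i| ≤ Bd i := by
        intro i
        have hσyR : dotP (toR z) (toR y) = 0 := by
          rw [← St18.sigmaL_cast, hσy]
          norm_num
        have hdec := decomp (toR y) hσyR
        have hdec2 : toR y = ∑ k : {j : Fin n // j ≠ j₀}, (c k - (m k : ℝ)) • toR (vv k) := by
          rw [hdec]
          apply Finset.sum_congr rfl
          intro k _
          rw [hypair k]
          congr 1
          field_simp
        have hyi : ((y i : ℤ) : ℝ)
            = ∑ k : {j : Fin n // j ≠ j₀}, (c k - (m k : ℝ)) * ((vv k i : ℤ) : ℝ) := by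
          have := congrFun hdec2 i
          rw [Finset.sum_apply] at this
          simpa [toR] using this
        have habs : |((y i : ℤ) : ℝ)| ≤ ∑ k : {j : Fin n // j ≠ j₀}, |((vv k i : ℤ) : ℝ)| := by
          rw [hyi]
          refine le_trans (Finset.abs_sum_le_sum_abs _ _) ?_
          apply Finset.sum_le_sum
          intro k _
          rw [abs_mul]
          have h5 := hcm k
          have h6 : |c k - (m k : ℝ)| ≤ 1 := abs_le.mpr ⟨by linarith [h5.1], h5.2⟩
          nlinarith [abs_nonneg ((vv k i : ℤ) : ℝ), abs_nonneg (c k - (m k : ℝ))]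
        have hcast : (|y i| : ℝ) ≤ ((Bd i : ℤ) : ℝ) := by
          rw [hBd]
          push_cast
          rw [← Int.cast_abs]
          push_cast
          exact_mod_cast habs
        exact_mod_cast hcast
      have hxEq : x = y + ∑ k, m k • vv k := by rw [hydef]; abel
      rw [hxEq]
      apply AddSubmonoid.add_mem
      · apply AddSubmonoid.subset_closure
        rw [Finset.coe_union, Set.mem_union]
        left
        rw [Finset.mem_coe, Set.Finite.mem_toFinset]
        exact ⟨hyM, hyBox⟩
      · apply AddSubmonoid.sum_mem
        intro k _
        apply AddSubmonoid.nsmul_mem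
        apply AddSubmonoid.subset_closure
        rw [Finset.coe_union, Set.mem_union]
        right
        rw [Finset.mem_coe, Finset.mem_image]
        exact ⟨k, Finset.mem_univ k, rfl⟩
  · -- normal
    intro cnat x hc hxgp hcx
    obtain ⟨h1, h2⟩ := (hmem _).mp hcx
    have hcR : (0:ℝ) < (cnat:ℝ) := by exact_mod_cast hc
    refine (hmem _).mpr ⟨?_, fun j hj => ?_⟩
    · have h3 : (cnat:ℤ) • St18.sigmaL z x = 0 := by rw [← map_smul]; exact h1
      rw [smul_eq_mul] at h3
      rcases mul_eq_zero.mp h3 with h | h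
      · exfalso
        have hcne : (cnat:ℤ) ≠ 0 := by exact_mod_cast hc.ne'
        exact hcne h
      · exact h
    · have h3 := h2 j hj
      rw [St18.toR_zsmul, St18.dotP_smul_right] at h3
      push_cast at h3
      nlinarith
  · -- simplicial
    refine ⟨u, ?_, ?_⟩
    · rw [Fintype.linearIndependent_iff]
      intro g hg k₀
      have hpair := congrArg (dotP (wR (ε k₀).1)) hg
      rw [St18.dotP_sum_smul_right, St18.dotP_zero_right] at hpair
      have hsum : (∑ k, g k * dotP (wR (ε k₀).1) (u k)) = g k₀ * (D:ℝ) := by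
        rw [Finset.sum_eq_single k₀]
        · rw [hu]
          simp only []
          rw [pairV (ε k₀).1 (ε k₀) (ε k₀).2, if_pos rfl]
        · intro k _ hk
          rw [hu]
          simp only []
          rw [pairV (ε k₀).1 (ε k) (ε k₀).2, if_neg, mul_zero]
          intro hkk
          exact hk (ε.injective (Subtype.ext hkk.symm))
        · intro hmemx
          exact absurd (Finset.mem_univ _) hmemx
      rw [hsum] at hpair
      rcases mul_eq_zero.mp hpair with h | h
      · exact h
      · exact absurd h hDne
    · rw [coneM, hcone]
  · -- basis of gp M'
    have hsurj : Function.Surjective (St18.sigmaL z) := by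
      intro a
      refine ⟨a • e, ?_⟩
      rw [map_smul, hσe, smul_eq_mul, mul_one]
    have hker : gp M' = (LinearMap.ker (St18.sigmaL z)).toAddSubgroup := by
      apply le_antisymm
      · rw [gp]
        rw [AddSubgroup.closure_le]
        intro x hx
        exact ((hmem x).mp hx).1
      · intro x hx
        have hσx : St18.sigmaL z x = 0 := hx
        have hR : ∃ N : ℕ, ∀ j, j ≠ j₀ → -(dotP (wR j) (toR x)) ≤ (N : ℝ) * (D:ℝ) := by
          obtain ⟨N, hN⟩ := exists_nat_ge
            ((∑ k : {j : Fin n // j ≠ j₀}, |dotP (wR k.1) (toR x)|) / (D:ℝ))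
          refine ⟨N, fun j hj => ?_⟩
          have h1 : |dotP (wR j) (toR x)|
              ≤ ∑ k : {j : Fin n // j ≠ j₀}, |dotP (wR k.1) (toR x)| :=
            Finset.single_le_sum
              (f := fun k : {j : Fin n // j ≠ j₀} => |dotP (wR k.1) (toR x)|)
              (fun k _ => abs_nonneg _) (Finset.mem_univ ⟨j, hj⟩)
          have h2 := neg_abs_le (dotP (wR j) (toR x))
          rw [div_le_iff₀ hDR] at hN
          linarith
        obtain ⟨N, hNle⟩ := hR
        have hσNp : St18.sigmaL z (N • p) = 0 := by
          rw [← natCast_zsmul, map_smul, hσp, smul_zero]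
        have hxN : x + N • p ∈ M' := by
          refine (hmem _).mpr ⟨?_, fun j hj => ?_⟩
          · rw [map_add, hσx, hσNp, add_zero]
          · rw [St18.toR_add, St18.dotP_add_right, St18.toR_nsmul, St18.dotP_smul_right,
              hppair j hj]
            have := hNle j hj
            linarith
        have hxEq : x = (x + N • p) - N • p := by abel
        rw [hxEq]
        exact AddSubgroup.sub_mem _ (AddSubgroup.subset_closure hxN)
          (AddSubgroup.nsmul_mem _ (AddSubgroup.subset_closure hpM) N)
    have hB : Module.finrank ℤ (LinearMap.ker (St18.sigmaL z)) = n - 1 := by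
      have h2 := LinearMap.rank_eq_of_surjective hsurj
      rw [Module.rank_self, rank_fun',
        ← Module.finrank_eq_rank ℤ (LinearMap.ker (St18.sigmaL z))] at h2
      simp only [Fintype.card_fin] at h2
      have h4 : n = 1 + Module.finrank ℤ (LinearMap.ker (St18.sigmaL z)) := by
        exact_mod_cast h2
      omega
    have B0 : Module.Basis (Fin (n-1)) ℤ (LinearMap.ker (St18.sigmaL z)) :=
      Module.finBasisOfFinrankEq ℤ _ hB
    have e1 : (LinearMap.ker (St18.sigmaL z)).toAddSubgroup ≃+ gp M' :=
      AddEquiv.addSubgroupCongr hker.symm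
    have e2 : LinearMap.ker (St18.sigmaL z) ≃+ gp M' := e1
    exact ⟨B0.map e2.toIntLinearEquiv⟩
  · -- the set equality
    have hNchar : ∀ v : Fin n → ℤ,
        (∃ (znat : ℕ) (uu : Fin n → ℤ), toR uu ∈ Cstar ∧ v = uu - (znat:ℤ) • e)
          ↔ (∀ j, j ≠ j₀ → 0 ≤ dotP (wR j) (toR v)) := by
      intro v
      constructor
      · rintro ⟨znat, uu, huu, rfl⟩ j hj
        rw [St18.toR_sub, St18.toR_zsmul, St18.dotP_sub_right, St18.dotP_smul_right,
          hje j hj, mul_zero, sub_zero]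
        exact (memCstar _).mp huu j
      · intro hv
        set t : ℕ := ⌈(-(dotP (wR j₀) (toR v))) / dotP (wR j₀) (toR e)⌉₊ with ht
        refine ⟨t, v + (t:ℤ) • e, ?_, by abel⟩
        apply (memCstar _).mpr
        intro j
        rw [St18.toR_add, St18.toR_zsmul, St18.dotP_add_right, St18.dotP_smul_right]
        rcases eq_or_ne j j₀ with hj | hj
        · subst hj
          have hceil := Nat.le_ceil ((-(dotP (wR j) (toR v))) / dotP (wR j) (toR e))
          rw [div_le_iff₀ hhpos] at hceil
          push_cast
          push_cast at hceil
          linarith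
        · rw [hje j hj, mul_zero, add_zero]
          exact hv j hj
    ext v
    simp only [Set.mem_setOf_eq]
    rw [hNchar v]
    constructor
    · intro hv
      refine ⟨St18.sigmaL z v, v - (St18.sigmaL z v) • e, ?_, by abel⟩
      refine (hmem _).mpr ⟨?_, fun j hj => ?_⟩
      · rw [map_sub, map_smul, hσe, smul_eq_mul, mul_one, sub_self]
      · rw [St18.toR_sub, St18.toR_zsmul, St18.dotP_sub_right, St18.dotP_smul_right,
          hje j hj, mul_zero, sub_zero]
        exact hv j hj
    · rintro ⟨zz, m, hm, rfl⟩ j hj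
      rw [St18.toR_add, St18.toR_zsmul, St18.dotP_add_right, St18.dotP_smul_right,
        hje j hj, mul_zero, zero_add]
      exact ((hmem m).mp hm).2 j hj
  · -- directness
    intro z1 z2 m m' hm hm' heq
    have h1 := congrArg (St18.sigmaL z) heq
    rw [map_add, map_add, map_smul, map_smul, hσe, ((hmem m).mp hm).1,
      ((hmem m').mp hm').1, add_zero, add_zero, smul_eq_mul, smul_eq_mul,
      mul_one, mul_one] at h1
    refine ⟨h1, ?_⟩
    rw [h1] at heq
    exact add_left_cancel heq
  · -- the dual is F
    ext φ
    simp only [Set.mem_setOf_eq]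
    constructor
    · intro hφ
      -- decompose φ in the basis wR
      have hφmem : φ ∈ Submodule.span ℝ (Set.range wR) := by rw [hWtop]; trivial
      rw [Submodule.mem_span_range_iff_exists_fun] at hφmem
      obtain ⟨a, ha⟩ := hφmem
      have hconeM0 : (0 : Fin n → ℝ) ∈ coneM M' := by
        rw [coneM]
        exact Submodule.zero_mem _
      have hQe : ∀ t : ℝ, 0 ≤ dotP φ (t • toR e) := by
        intro t
        have := hφ (t • toR e + 0) ⟨t, 0, hconeM0, rfl⟩
        simpa using this
      have hφe : dotP φ (toR e) = 0 := by
        have h1 := hQe 1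
        have h2 := hQe (-1)
        rw [one_smul] at h1
        rw [neg_smul, one_smul, St18.dotP_neg_right] at h2
        linarith
      -- pairing of φ with wR in terms of a
      have hφpair : ∀ x : Fin n → ℝ, dotP φ x = ∑ j, a j * dotP (wR j) x := by
        intro x
        conv_lhs => rw [← ha]
        rw [St18.dotP_comm, St18.dotP_sum_smul_right]
        exact Finset.sum_congr rfl fun j _ => by rw [St18.dotP_comm]
      have haj₀ : a j₀ = 0 := by
        have h1 := hφpair (toR e)
        rw [hφe] at h1
        have h2 : (∑ j, a j * dotP (wR j) (toR e)) = a j₀ * dotP (wR j₀) (toR e) := by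
          rw [Finset.sum_eq_single j₀]
          · intro j _ hj
            rw [hje j hj, mul_zero]
          · intro hmemx
            exact absurd (Finset.mem_univ _) hmemx
        rw [h2] at h1
        rcases mul_eq_zero.mp h1.symm with h | h
        · exact h
        · exact absurd h (ne_of_gt hhpos)
      have haj : ∀ k : {j : Fin n // j ≠ j₀}, 0 ≤ a k.1 := by
        intro k
        have hQk : 0 ≤ dotP φ (toR (vv k)) := by
          have hmemk : toR (vv k) ∈ coneM M' := by
            rw [coneM]
            exact Submodule.subset_span ⟨vv k, hvvM k, rfl⟩
          have := hφ ((0:ℝ) • toR e + toR (vv k)) ⟨0, toR (vv k), hmemk, rfl⟩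
          simpa using this
        have h1 := hφpair (toR (vv k))
        have h2 : (∑ j, a j * dotP (wR j) (toR (vv k))) = a k.1 * (D:ℝ) := by
          rw [Finset.sum_eq_single k.1]
          · rw [pairV k.1 k k.2, if_pos rfl]
          · intro j _ hj
            rcases eq_or_ne j j₀ with hjj | hjj
            · rw [hjj, haj₀, zero_mul]
            · rw [pairV j k hjj, if_neg hj, mul_zero]
          · intro hmemx
            exact absurd (Finset.mem_univ _) hmemx
        rw [h1, h2] at hQk
        nlinarith
      -- conclude φ ∈ F
      rw [hF]
      rw [SetLike.mem_coe]
      rw [← ha]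
      apply Submodule.sum_mem
      intro j _
      rcases eq_or_ne j j₀ with hj | hj
      · rw [hj, haj₀, zero_smul]
        exact Submodule.zero_mem _
      · have hsm : a j • wR j = (⟨a j, haj ⟨j, hj⟩⟩ : ℝ≥0) • wR j := by
          rfl
        rw [hsm]
        exact Submodule.smul_mem _ _ (Submodule.subset_span ⟨⟨j, hj⟩, rfl⟩)
    · intro hφ q hq
      obtain ⟨t, c, hc, rfl⟩ := hq
      rw [hF] at hφ
      rw [St18.dotP_add_right, St18.dotP_smul_right]
      rw [SetLike.mem_coe] at hφ
      have hφe : dotP φ (toR e) = 0 := by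
        refine St18.span_zero_left _ (toR e) ?_ φ hφ
        rintro _ ⟨k, rfl⟩
        exact hje k.1 k.2
      have hφc : 0 ≤ dotP φ c := by
        rw [coneM, SetLike.mem_coe] at hc
        refine St18.span_nonneg _ φ ?_ c hc
        rintro _ ⟨x, hx, rfl⟩
        refine St18.span_nonneg_left _ (toR x) ?_ φ hφ
        rintro _ ⟨k, rfl⟩
        exact ((hmem x).mp hx).2 k.1 k.2
      rw [hφe, mul_zero, zero_add]
      exact hφc
end
end

section
/- Let M′ be a positive normal affine monoid of rank r inside ℤ^r ⊆ ℤ^n = ℤ ⊕ ℤ^r with e = (1,0), let {x₁,…,x_r} be a free basis of gp(M′) with ℝ₊M′ ⊆ ℝ₊x₁ + ⋯ + ℝ₊x_r, and let N₊ be a normal affine submonoid of ℤ^n with ℝ₊N₊ ⊆ ℝ₊e + ℝ₊M′ and e ∈ N₊. Then for all sufficiently large natural numbers c, the monoid M = ℤ^n ∩ (ℝ₊(x₁ − ce) + ⋯ + ℝ₊(x_r − ce)) satisfies both ℝ₊N₊ ⊆ ℝ₊e + ℝ₊M and ℝ₊N₊ ∩ ℝ₊M = {0}. -/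
open scoped NNReal
noncomputable section

/-- Real image of a vector in `ℤ ⊕ ℤ^r`. -/
def toRn {r : ℕ} (p : ℤ × (Fin r → ℤ)) : ℝ × (Fin r → ℝ) := ((p.1 : ℝ), toR p.2)

/-- given a positive normal affine monoid M′ of rank r (inside
ℤⁿ = ℤ ⊕ ℤ^r, e = (1,0)), a basis x₁,…,x_r of gp(M′) with ℝ₊M′ ⊆ ℝ₊x₁ + ⋯ + ℝ₊x_r, and
a normal affine submonoid N₊ of ℤⁿ with e ∈ N₊ and ℝ₊N₊ ⊆ ℝ₊e + ℝ₊M′, then for all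
sufficiently large c the monoid M = ℤⁿ ∩ (ℝ₊(x₁ - ce) + ⋯ + ℝ₊(x_r - ce)) satisfies
ℝ₊N₊ ⊆ ℝ₊e + ℝ₊M and ℝ₊N₊ ∩ ℝ₊M = {0}. -/
theorem statement19 {r : ℕ} (M' : AddSubmonoid (Fin r → ℤ))
    (hFG : M'.FG) (hpos : IsPositiveMonoid M') (hnorm : IsNormalMonoid M')
    (hgp : gp M' = ⊤)
    (x : Fin r → (Fin r → ℤ)) (hx : ∃ b : Module.Basis (Fin r) ℤ (Fin r → ℤ), x = ⇑b)
    (hcone : coneM M' ⊆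
      (Submodule.span ℝ≥0 (Set.range fun j => toR (x j)) : Set (Fin r → ℝ)))
    (Nplus : AddSubmonoid (ℤ × (Fin r → ℤ)))
    (hNFG : Nplus.FG) (hNnorm : IsNormalMonoid Nplus)
    (hNpointed : IsPositiveMonoid Nplus)
    (heN : eVec r ∈ Nplus)
    -- ℝ₊N₊ ⊆ ℝ₊e + ℝ₊M′ :
    (hNcone : ∀ q ∈ (Submodule.span ℝ≥0 (toRn '' (Nplus : Set (ℤ × (Fin r → ℤ)))) :
        Set (ℝ × (Fin r → ℝ))),
      ∃ (t : ℝ≥0) (mR : Fin r → ℝ), mR ∈ coneM M' ∧ q = t • toRn (eVec r) + ((0 : ℝ), mR)) :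
    ∃ c₀ : ℕ, ∀ c : ℕ, c₀ ≤ c →
      -- with M = ℤⁿ ∩ (ℝ₊(x₁ - ce) + ⋯ + ℝ₊(x_r - ce)), whose cone is
      -- ℝ₊M = ℝ₊(toRn '' M) for M = {p | toRn p ∈ span ℝ₊ {x_j - ce}}:
      (∀ q ∈ (Submodule.span ℝ≥0 (toRn '' (Nplus : Set (ℤ × (Fin r → ℤ)))) :
          Set (ℝ × (Fin r → ℝ))),
        ∃ (t : ℝ≥0) (m : ℝ × (Fin r → ℝ)),
          m ∈ (Submodule.span ℝ≥0
            (toRn '' {p : ℤ × (Fin r → ℤ) | toRn p ∈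
              (Submodule.span ℝ≥0 (Set.range fun j => toRn ((-(c : ℤ), x j))) :
                Set (ℝ × (Fin r → ℝ)))}) : Set (ℝ × (Fin r → ℝ))) ∧
          q = t • toRn (eVec r) + m) ∧
      (∀ q ∈ (Submodule.span ℝ≥0 (toRn '' (Nplus : Set (ℤ × (Fin r → ℤ)))) :
          Set (ℝ × (Fin r → ℝ))),
        q ∈ (Submodule.span ℝ≥0
            (toRn '' {p : ℤ × (Fin r → ℤ) | toRn p ∈
              (Submodule.span ℝ≥0 (Set.range fun j => toRn ((-(c : ℤ), x j))) :
                Set (ℝ × (Fin r → ℝ)))}) : Set (ℝ × (Fin r → ℝ))) →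
        q = 0) := by
  classical
  refine ⟨1, fun c hc => ?_⟩
  -- The M-cone equals the cone generated by the (-c, x j)
  have hconeeq : (Submodule.span ℝ≥0
      (toRn '' {p : ℤ × (Fin r → ℤ) | toRn p ∈
        (Submodule.span ℝ≥0 (Set.range fun j => toRn ((-(c : ℤ), x j))) :
          Set (ℝ × (Fin r → ℝ)))})) =
      Submodule.span ℝ≥0 (Set.range fun j => toRn ((-(c : ℤ), x j))) := by
    apply le_antisymm
    · rw [Submodule.span_le]
      rintro q ⟨p, hp, rfl⟩
      exact hp
    · rw [Submodule.span_le]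
      rintro q ⟨j, rfl⟩
      exact Submodule.subset_span
        ⟨(-(c : ℤ), x j), Submodule.subset_span ⟨j, rfl⟩, rfl⟩
  have he : toRn (eVec r) = ((1 : ℝ), (0 : Fin r → ℝ)) := by
    unfold toRn eVec toR
    simp [Prod.ext_iff, funext_iff]
  have hgen : ∀ j, toRn ((-(c : ℤ), x j) : ℤ × (Fin r → ℤ)) =
      ((0 : ℝ), toR (x j)) - (c : ℝ) • ((1 : ℝ), (0 : Fin r → ℝ)) := by
    intro j
    unfold toRn
    simp [Prod.ext_iff]
  constructor
  · -- ℝ₊N₊ ⊆ ℝ₊e + ℝ₊M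
    intro q hq
    obtain ⟨t, mR, hmR, hqeq⟩ := hNcone q hq
    obtain ⟨b, hb⟩ := Submodule.mem_span_range_iff_exists_fun ℝ≥0 |>.mp (hcone hmR)
    refine ⟨t + (c : ℝ≥0) * ∑ j, b j, ∑ j, b j • toRn ((-(c : ℤ), x j)), ?_, ?_⟩
    · rw [hconeeq]
      exact Submodule.sum_mem _ fun j _ =>
        Submodule.smul_mem _ _ (Submodule.subset_span ⟨j, rfl⟩)
    · rw [hqeq, he]
      have h2 : ∑ j, b j • toRn ((-(c : ℤ), x j) : ℤ × (Fin r → ℤ)) =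
          ((0 : ℝ), mR) - ((c : ℝ) * ((∑ j, b j : ℝ≥0) : ℝ)) •
            ((1 : ℝ), (0 : Fin r → ℝ)) := by
        have : ∀ j, b j • toRn ((-(c : ℤ), x j) : ℤ × (Fin r → ℤ)) =
            ((0 : ℝ), b j • toR (x j)) - ((c : ℝ) * (b j : ℝ)) •
              ((1 : ℝ), (0 : Fin r → ℝ)) := by
          intro j
          rw [hgen j, NNReal.smul_def, smul_sub, smul_smul, Prod.smul_mk,
            mul_comm ((b j : ℝ)) (c : ℝ)]
          simp [NNReal.smul_def]
        rw [Finset.sum_congr rfl fun j _ => this j, Finset.sum_sub_distrib,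
          ← Finset.sum_smul]
        congr 1
        · rw [Prod.ext_iff]
          constructor
          · simp [Prod.fst_sum]
          · simpa [Prod.snd_sum] using hb
        · congr 1
          rw [NNReal.coe_sum, Finset.mul_sum]
      rw [h2]
      have hsmul : ∀ (s : ℝ≥0) (v : ℝ × (Fin r → ℝ)), s • v = (s : ℝ) • v :=
        fun s v => rfl
      rw [hsmul, hsmul]
      push_cast
      module
  · -- ℝ₊N₊ ∩ ℝ₊M = {0}
    intro q hq hqM
    rw [hconeeq] at hqM
    obtain ⟨a, ha⟩ := Submodule.mem_span_range_iff_exists_fun ℝ≥0 |>.mp hqM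
    obtain ⟨t, mR, hmR, hqeq⟩ := hNcone q hq
    -- first coordinate
    have h1 : q.1 = (t : ℝ) := by
      rw [hqeq, he]
      simp [NNReal.smul_def]
    have h2 : q.1 = -((c : ℝ) * ∑ j, (a j : ℝ)) := by
      have hterm : ∀ j, ((a j) • toRn ((-(c : ℤ), x j) : ℤ × (Fin r → ℤ))).1 =
          -((c : ℝ) * (a j : ℝ)) := by
        intro j
        rw [NNReal.smul_def, hgen j]
        simp [mul_comm]
      rw [← ha, Prod.fst_sum]
      simp only [hterm]
      rw [Finset.mul_sum]
      simp
    have hsum : ∑ j, (a j : ℝ) = 0 := by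
      have hc0 : (0 : ℝ) < (c : ℝ) := by exact_mod_cast Nat.lt_of_lt_of_le Nat.zero_lt_one hc
      have hsnn : (0 : ℝ) ≤ ∑ j, (a j : ℝ) :=
        Finset.sum_nonneg fun j _ => (a j).2
      have htnn : (0 : ℝ) ≤ (t : ℝ) := t.2
      nlinarith [h1.symm.trans h2]
    have haz : ∀ j, a j = 0 := by
      intro j
      have := (Finset.sum_eq_zero_iff_of_nonneg
        (fun j _ => (a j).2)).mp hsum j (Finset.mem_univ j)
      exact NNReal.coe_eq_zero.mp this
    rw [← ha]
    simp [haz]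
end
end
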